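/- Let G be a connected graph, f a harmonic eigenvector for λ₁, u and v vertices with f(u) ≤ f(z) ≤ f(v) for all z, and S the edge set of a shortest u–v path. Then λ₁ ≥ (f(v) − f(u))²/(|S| · Σ_x f(x)²d(x)), assuming f is normalized so that the Rayleigh quotient of f equals λ₁. -/

import Mathlib

open Finset
open scoped Classical

noncomputable section

variable {V : Type*}

/-- Dirichlet energy `∑_{u~v} (f u - f v)^2` (each edge counted once). -/
def SimpleGraph.energyForm [Fintype V] (G : SimpleGraph V) (f : V → ℝ) : ℝ :=
  (1/2) * ∑ x : V, ∑ y : V, if G.Adj x y then (f x - f y)^2 else 0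

/-- The weighted norm `∑_x f(x)^2 d(x)`. -/
def SimpleGraph.qForm [Fintype V] (G : SimpleGraph V) (f : V → ℝ) : ℝ :=
  ∑ x : V, (f x)^2 * (G.degree x : ℝ)

/-- The spectral gap of the normalized Laplacian, via the variational characterization
`λ₁ = inf { R(f) : ∑ f(u) d(u) = 0, f ≢ 0 }`. -/
def SimpleGraph.lambda1 [Fintype V] (G : SimpleGraph V) : ℝ :=
  sInf { r | ∃ f : V → ℝ, (∑ x : V, f x * (G.degree x : ℝ)) = 0 ∧ G.qForm f ≠ 0 ∧
    r = G.energyForm f / G.qForm f }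

/-- squared difference as a function on unordered pairs -/
def sqDiff (f : V → ℝ) : Sym2 V → ℝ :=
  Sym2.lift ⟨fun x y => (f x - f y)^2, fun x y => by ring⟩

lemma sqDiff_nonneg (f : V → ℝ) (e : Sym2 V) : 0 ≤ sqDiff f e := by
  induction e using Sym2.ind with
  | _ x y => exact sq_nonneg _

lemma energy_eq_sum_edges [Fintype V] (G : SimpleGraph V) (f : V → ℝ) :
    G.energyForm f = ∑ e ∈ G.edgeFinset, sqDiff f e := by
  classical
  have h1 : ∑ x : V, ∑ y : V, (if G.Adj x y then (f x - f y)^2 else 0)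
      = ∑ q ∈ (Finset.univ ×ˢ Finset.univ).filter (fun q : V × V => G.Adj q.1 q.2),
          sqDiff f (Function.uncurry Sym2.mk q) := by
    rw [Finset.sum_filter, ← Finset.sum_product']
    refine Finset.sum_congr rfl fun q _ => ?_
    rcases q with ⟨a, b⟩
    simp [sqDiff]
  have h2 : ∑ q ∈ (Finset.univ ×ˢ Finset.univ).filter (fun q : V × V => G.Adj q.1 q.2),
      sqDiff f (Function.uncurry Sym2.mk q)
      = ∑ e ∈ ((Finset.univ ×ˢ Finset.univ).filter
          (fun q : V × V => G.Adj q.1 q.2)).image (Function.uncurry Sym2.mk),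
          (((Finset.univ ×ˢ Finset.univ).filter (fun q : V × V => G.Adj q.1 q.2)).filter
            (fun q => Function.uncurry Sym2.mk q = e)).card • sqDiff f e :=
    Finset.sum_comp (sqDiff f) (Function.uncurry Sym2.mk)
  have himg : ((Finset.univ ×ˢ Finset.univ).filter
      (fun q : V × V => G.Adj q.1 q.2)).image (Function.uncurry Sym2.mk) = G.edgeFinset := by
    ext e
    induction e using Sym2.ind with
    | _ x y =>
      simp [SimpleGraph.mem_edgeFinset, Finset.mem_image, SimpleGraph.mem_edgeSet]
      constructor
      · rintro ⟨a, b, hab, ⟨rfl, rfl⟩ | ⟨rfl, rfl⟩⟩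
        · exact hab
        · exact hab.symm
      · intro h; exact ⟨x, y, h, Or.inl ⟨rfl, rfl⟩⟩
  have hcard : ∀ e ∈ G.edgeFinset,
      (((Finset.univ ×ˢ Finset.univ).filter (fun q : V × V => G.Adj q.1 q.2)).filter
        (fun q => Function.uncurry Sym2.mk q = e)).card = 2 := by
    intro e he
    induction e using Sym2.ind with
    | _ x y =>
      rw [SimpleGraph.mem_edgeFinset, SimpleGraph.mem_edgeSet] at he
      have : (((Finset.univ ×ˢ Finset.univ).filter (fun q : V × V => G.Adj q.1 q.2)).filter
          (fun q => Function.uncurry Sym2.mk q = s(x, y))) = {(x, y), (y, x)} := by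
        ext ⟨a, b⟩
        simp only [Finset.mem_filter, Finset.mem_product, Finset.mem_univ, true_and,
          Finset.mem_insert, Finset.mem_singleton, Prod.ext_iff, Function.uncurry_apply_pair, Sym2.eq_iff]
        constructor
        · rintro ⟨-, h⟩; exact h
        · rintro (⟨rfl, rfl⟩ | ⟨rfl, rfl⟩)
          · exact ⟨he, Or.inl ⟨rfl, rfl⟩⟩
          · exact ⟨he.symm, Or.inr ⟨rfl, rfl⟩⟩
      rw [this]
      rw [Finset.card_insert_of_notMem (by
        intro hmem
        simp only [Finset.mem_singleton, Prod.ext_iff] at hmem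
        exact he.ne hmem.1), Finset.card_singleton]
  rw [SimpleGraph.energyForm, h1, h2, himg, Finset.sum_congr rfl
    (fun e he => by rw [hcard e he])]
  simp only [nsmul_eq_mul, Nat.cast_ofNat]
  rw [← Finset.mul_sum]
  ring

lemma walk_sq_le [Fintype V] (G : SimpleGraph V) (f : V → ℝ) {u v : V} (p : G.Walk u v) :
    (f v - f u)^2 ≤ (p.length : ℝ) * (p.edges.map (sqDiff f)).sum := by
  induction p with
  | nil => simp
  | @cons a b c h q ih =>
    simp only [SimpleGraph.Walk.length_cons, SimpleGraph.Walk.edges_cons, List.map_cons,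
      List.sum_cons, Nat.cast_add, Nat.cast_one]
    have hS : 0 ≤ (q.edges.map (sqDiff f)).sum :=
      List.sum_nonneg (by
        intro x hx
        rcases List.mem_map.1 hx with ⟨e, -, rfl⟩
        exact sqDiff_nonneg f e)
    have hed : sqDiff f s(a, b) = (f a - f b)^2 := rfl
    rw [hed]
    set n : ℝ := (q.length : ℝ) with hn
    have hn0 : 0 ≤ n := Nat.cast_nonneg _
    set S : ℝ := (q.edges.map (sqDiff f)).sum
    set x : ℝ := f c - f b
    set a' : ℝ := f b - f a with ha'
    have hax : f c - f a = x + a' := by ring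
    have hsq : (f a - f b)^2 = a'^2 := by rw [ha']; ring
    rw [hax, hsq]
    rcases eq_or_lt_of_le hn0 with hzero | hpos'
    · have hx2 : x^2 ≤ 0 := by rw [← hzero] at ih; linarith
      have hx : x = 0 := by nlinarith [sq_nonneg x]
      rw [hx]
      nlinarith
    · nlinarith [sq_nonneg (n * a' - x),
        mul_nonneg (by linarith : (0:ℝ) ≤ n + 1) (by linarith : (0:ℝ) ≤ n * S - x^2)]

theorem lambda1_ge_path_bound [Fintype V] (G : SimpleGraph V) (hG : G.Connected)
    (f : V → ℝ) (hf0 : (∑ x : V, f x * (G.degree x : ℝ)) = 0) (hq : G.qForm f ≠ 0)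
    (hray : G.energyForm f / G.qForm f = G.lambda1)
    (u v : V) (hu : ∀ z, f u ≤ f z) (hv : ∀ z, f z ≤ f v)
    (p : G.Walk u v) (hp : p.IsPath) (hlen : p.length = G.dist u v) :
    G.lambda1 ≥ (f v - f u)^2 / ((p.length : ℝ) * G.qForm f) := by
  classical
  have hQnn : 0 ≤ G.qForm f :=
    Finset.sum_nonneg fun x _ => mul_nonneg (sq_nonneg _) (Nat.cast_nonneg _)
  have hQ : 0 < G.qForm f := lt_of_le_of_ne hQnn (Ne.symm hq)
  have hEnn : 0 ≤ G.energyForm f := by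
    rw [energy_eq_sum_edges]
    exact Finset.sum_nonneg fun e _ => sqDiff_nonneg f e
  rcases Nat.eq_zero_or_pos p.length with h0 | hpos
  · rw [h0]
    simp only [Nat.cast_zero, zero_mul, div_zero, ge_iff_le]
    rw [← hray]
    exact div_nonneg hEnn hQnn
  · have hL : (0:ℝ) < (p.length : ℝ) := by exact_mod_cast hpos
    have hkey : (f v - f u)^2 ≤ (p.length : ℝ) * G.energyForm f := by
      refine (walk_sq_le G f p).trans ?_
      refine mul_le_mul_of_nonneg_left ?_ (le_of_lt hL)
      have hnd := hp.edges_nodup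
      have : (p.edges.map (sqDiff f)).sum = ∑ e ∈ p.edges.toFinset, sqDiff f e := by
        rw [List.sum_toFinset _ hnd]
      rw [this, energy_eq_sum_edges]
      refine Finset.sum_le_sum_of_subset_of_nonneg ?_ fun e he _ => sqDiff_nonneg f e
      intro e he
      rw [List.mem_toFinset] at he
      rw [SimpleGraph.mem_edgeFinset]
      exact p.edges_subset_edgeSet he
    rw [ge_iff_le, ← hray, div_le_div_iff₀ (mul_pos hL hQ) hQ]
    nlinarith [hQ, hkey]
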